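/- Suppose b is a random variable with continuous density f > 0 and CDF F on [0, B]. If δ(b) = b + F(b)/f(b) is such that F/f is differentiable and (F/f)'(b) ≥ −1 fails nowhere, i.e. δ is non-decreasing, and x(·) is any non-increasing allocation, then the expected Myerson payment satisfies E_b[b·x(b) + ∫_b^B x(s) ds] = E_b[δ(b)·x(b)]. -/

import Mathlib

open MeasureTheory intervalIntegral Set

/-- Fubini on the triangle: ∫₀^B (∫_b^B g) f(b) db = ∫₀^B (∫₀^s f) g(s) ds. -/
private lemma fubini_tri (B : ℝ) (hB : 0 ≤ B) (f g : ℝ → ℝ)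
    (hf : Continuous f) (hg : Antitone g) :
    ∫ b in Set.Ioc (0:ℝ) B, (∫ s in Set.Ioc b B, g s) * f b =
      ∫ s in Set.Ioc (0:ℝ) B, (∫ b in Set.Ioc (0:ℝ) s, f b) * g s := by
  obtain ⟨C, hC⟩ := (isCompact_Icc (a := (0:ℝ)) (b := B)).exists_bound_of_continuousOn
    hf.continuousOn
  set D : ℝ := max ‖g 0‖ ‖g B‖ with hD
  have hgb : ∀ s ∈ Set.Ioc (0:ℝ) B, ‖g s‖ ≤ D := by
    intro s hs
    have h1 : g B ≤ g s := hg hs.2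
    have h2 : g s ≤ g 0 := hg hs.1.le
    rw [Real.norm_eq_abs, abs_le]
    constructor
    · calc -D ≤ -‖g B‖ := by simp [hD]
        _ ≤ g B := neg_abs_le _
        _ ≤ g s := h1
    · calc g s ≤ g 0 := h2
        _ ≤ ‖g 0‖ := le_abs_self _
        _ ≤ D := le_max_left _ _
  have hD0 : 0 ≤ D := le_trans (norm_nonneg _) (le_max_left _ _)
  have hC0 : 0 ≤ C := le_trans (norm_nonneg (f 0)) (hC 0 ⟨le_refl _, hB⟩)
  set H : ℝ × ℝ → ℝ := fun p => (if p.1 < p.2 then g p.2 else 0) * f p.1 with hH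
  have hHm : Measurable H := by
    apply Measurable.mul
    · exact Measurable.ite (measurableSet_lt measurable_fst measurable_snd)
        (hg.measurable.comp measurable_snd) measurable_const
    · exact hf.measurable.comp measurable_fst
  haveI : IsFiniteMeasure (volume.restrict (Set.Ioc (0:ℝ) B)) := by
    constructor
    rw [Measure.restrict_apply MeasurableSet.univ, Set.univ_inter, Real.volume_Ioc]
    exact ENNReal.ofReal_lt_top
  have hInt : Integrable H
      ((volume.restrict (Set.Ioc (0:ℝ) B)).prod (volume.restrict (Set.Ioc (0:ℝ) B))) := by
    apply (integrable_const (D * C)).mono' hHm.aestronglyMeasurable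
    rw [Measure.prod_restrict]
    filter_upwards [ae_restrict_mem (measurableSet_Ioc.prod measurableSet_Ioc)] with p hp
    obtain ⟨hp1, hp2⟩ := hp
    rw [hH]
    simp only [norm_mul]
    by_cases h : p.1 < p.2
    · rw [if_pos h]
      exact mul_le_mul (hgb _ hp2) (hC _ (Set.Ioc_subset_Icc_self hp1)) (norm_nonneg _) hD0
    · rw [if_neg h]
      simp only [norm_zero, zero_mul]
      positivity
  calc ∫ b in Set.Ioc (0:ℝ) B, (∫ s in Set.Ioc b B, g s) * f b
      = ∫ b in Set.Ioc (0:ℝ) B, ∫ s in Set.Ioc (0:ℝ) B, H (b, s) := by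
        apply setIntegral_congr_fun measurableSet_Ioc
        intro b hb
        have h1 : ∫ s in Set.Ioc (0:ℝ) B, (if b < s then g s else 0)
            = ∫ s in Set.Ioc b B, g s := by
          have : ∀ s, (if b < s then g s else 0) = (Set.Ioi b).indicator g s := by
            intro s; simp [Set.indicator_apply, Set.mem_Ioi]
          simp_rw [this]
          rw [setIntegral_indicator measurableSet_Ioi, Set.Ioc_inter_Ioi,
            sup_of_le_right hb.1.le]
        rw [hH]
        simp only
        rw [MeasureTheory.integral_mul_const, h1]
    _ = ∫ s in Set.Ioc (0:ℝ) B, ∫ b in Set.Ioc (0:ℝ) B, H (b, s) :=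
        integral_integral_swap hInt
    _ = ∫ s in Set.Ioc (0:ℝ) B, (∫ b in Set.Ioc (0:ℝ) s, f b) * g s := by
        apply setIntegral_congr_fun measurableSet_Ioc
        intro s hs
        rw [hH]
        simp only
        have h2 : ∀ b, (if b < s then g s else 0) * f b = (if b < s then f b else 0) * g s := by
          intro b; by_cases h : b < s <;> simp [h, mul_comm]
        simp_rw [h2]
        rw [MeasureTheory.integral_mul_const]
        congr 1
        have h3 : ∀ b, (if b < s then f b else 0) = (Set.Iio s).indicator f b := by
          intro b; simp [Set.indicator_apply, Set.mem_Iio]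
        simp_rw [h3]
        rw [setIntegral_indicator measurableSet_Iio]
        have h4 : Set.Ioc (0:ℝ) B ∩ Set.Iio s = Set.Ioo 0 s := by
          ext y
          simp only [Set.mem_inter_iff, Set.mem_Ioc, Set.mem_Iio, Set.mem_Ioo]
          constructor
          · rintro ⟨⟨h1', _⟩, h3'⟩; exact ⟨h1', h3'⟩
          · rintro ⟨h1', h3'⟩; exact ⟨⟨h1', h3'.le.trans hs.2⟩, h3'⟩
        rw [h4, ← integral_Ioc_eq_integral_Ioo]

/-- Myerson's virtual-welfare identity: the expected payment equals the
    expectation of the virtual welfare δ(b) = b + F(b)/f(b) times the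
    allocation. -/
theorem stmt_14 (B : ℝ) (hB : 0 < B) (f : ℝ → ℝ) (x : ℝ → ℝ)
    (hf : Continuous f) (hfpos : ∀ b ∈ Set.Icc (0:ℝ) B, 0 < f b)
    (hx : AntitoneOn x (Set.Icc 0 B))
    (hδmono : MonotoneOn
      (fun b => b + (∫ s in (0:ℝ)..b, f s) / f b) (Set.Icc 0 B)) :
    ∫ b in (0:ℝ)..B, (b * x b + ∫ s in b..B, x s) * f b =
      ∫ b in (0:ℝ)..B,
        (b + (∫ s in (0:ℝ)..b, f s) / f b) * x b * f b := by
  have hB0 : (0:ℝ) ≤ B := hB.le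
  -- the antitone extension of x
  set x' : ℝ → ℝ := fun s => x (max 0 (min s B)) with hx'def
  have hmem : ∀ s : ℝ, max 0 (min s B) ∈ Set.Icc (0:ℝ) B := fun s =>
    ⟨le_max_left _ _, max_le hB0 (min_le_right _ _)⟩
  have hx'anti : Antitone x' := by
    intro s t hst
    exact hx (hmem s) (hmem t) (max_le_max le_rfl (min_le_min hst le_rfl))
  have hx'eq : ∀ s ∈ Set.Icc (0:ℝ) B, x' s = x s := by
    intro s hs
    rw [hx'def]
    simp only
    rw [min_eq_left hs.2, max_eq_right hs.1]
  have hx'int : ∀ a b : ℝ, IntervalIntegrable x' volume a b := fun a b =>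
    hx'anti.intervalIntegrable
  -- replace x by x' on both sides
  have hL : (∫ b in (0:ℝ)..B, (b * x b + ∫ s in b..B, x s) * f b)
      = ∫ b in (0:ℝ)..B, (b * x' b + ∫ s in b..B, x' s) * f b := by
    apply intervalIntegral.integral_congr
    intro b hb
    simp only
    rw [Set.uIcc_of_le hB0] at hb
    have hinner : (∫ s in b..B, x s) = ∫ s in b..B, x' s := by
      apply intervalIntegral.integral_congr
      intro s hs
      rw [Set.uIcc_of_le hb.2] at hs
      exact (hx'eq s ⟨hb.1.trans hs.1, hs.2⟩).symm
    rw [hinner, hx'eq b hb]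
  have hR : (∫ b in (0:ℝ)..B, (b + (∫ s in (0:ℝ)..b, f s) / f b) * x b * f b)
      = ∫ b in (0:ℝ)..B, (b + (∫ s in (0:ℝ)..b, f s) / f b) * x' b * f b := by
    apply intervalIntegral.integral_congr
    intro b hb
    simp only
    rw [Set.uIcc_of_le hB0] at hb
    rw [hx'eq b hb]
  rw [hL, hR]
  -- notation
  set F : ℝ → ℝ := fun b => ∫ s in (0:ℝ)..b, f s with hFdef
  have hFcont : Continuous F :=
    intervalIntegral.continuous_primitive (fun a b => hf.intervalIntegrable a b) 0
  set G : ℝ → ℝ := fun b => ∫ s in b..B, x' s with hGdef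
  have hGcont : Continuous G := by
    have : G = fun b => (∫ s in (0:ℝ)..B, x' s) - ∫ s in (0:ℝ)..b, x' s := by
      funext b
      rw [hGdef]
      simp only
      rw [eq_sub_iff_add_eq, add_comm, intervalIntegral.integral_add_adjacent_intervals
        (hx'int 0 b) (hx'int b B)]
    rw [this]
    exact continuous_const.sub
      (intervalIntegral.continuous_primitive hx'int 0)
  -- integrability of the pieces
  have hI1 : IntervalIntegrable (fun b => b * x' b * f b) volume 0 B := by
    have h : (fun b => b * x' b * f b) = fun b => x' b * (b * f b) := by
      funext b; ring
    rw [h]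
    exact (hx'int 0 B).mul_continuousOn (continuous_id.mul hf).continuousOn
  have hI2 : IntervalIntegrable (fun b => G b * f b) volume 0 B :=
    (hf.intervalIntegrable 0 B).continuousOn_mul hGcont.continuousOn
  have hI3 : IntervalIntegrable (fun b => F b * x' b) volume 0 B :=
    (hx'int 0 B).continuousOn_mul hFcont.continuousOn
  -- split LHS
  have hLsplit : (∫ b in (0:ℝ)..B, (b * x' b + ∫ s in b..B, x' s) * f b)
      = (∫ b in (0:ℝ)..B, b * x' b * f b) + ∫ b in (0:ℝ)..B, G b * f b := by
    rw [← intervalIntegral.integral_add hI1 hI2]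
    apply intervalIntegral.integral_congr
    intro b _
    simp only [hGdef]
    ring
  -- split RHS
  have hRsplit : (∫ b in (0:ℝ)..B, (b + (∫ s in (0:ℝ)..b, f s) / f b) * x' b * f b)
      = (∫ b in (0:ℝ)..B, b * x' b * f b) + ∫ b in (0:ℝ)..B, F b * x' b := by
    rw [← intervalIntegral.integral_add hI1 hI3]
    apply intervalIntegral.integral_congr
    intro b hb
    rw [Set.uIcc_of_le hB0] at hb
    have hfb : f b ≠ 0 := (hfpos b hb).ne'
    simp only [hFdef]
    field_simp
  rw [hLsplit, hRsplit]
  congr 1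
  -- the key Fubini step
  rw [intervalIntegral.integral_of_le hB0, intervalIntegral.integral_of_le hB0]
  have hL' : (∫ b in Set.Ioc (0:ℝ) B, G b * f b)
      = ∫ b in Set.Ioc (0:ℝ) B, (∫ s in Set.Ioc b B, x' s) * f b := by
    apply setIntegral_congr_fun measurableSet_Ioc
    intro b hb
    rw [hGdef]
    simp only
    rw [intervalIntegral.integral_of_le hb.2]
  have hR' : (∫ b in Set.Ioc (0:ℝ) B, F b * x' b)
      = ∫ b in Set.Ioc (0:ℝ) B, (∫ s in Set.Ioc (0:ℝ) b, f s) * x' b := by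
    apply setIntegral_congr_fun measurableSet_Ioc
    intro b hb
    rw [hFdef]
    simp only
    rw [intervalIntegral.integral_of_le hb.1.le]
  rw [hL', hR']
  exact fubini_tri B hB0 f x' hf hx'anti
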